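/- For all reals h ≥ 0 and h' ≥ 0 there exist reals k ≥ 0 and R ≥ 0, depending only on h and h', such that the following holds. Let G be a connected simple graph with vertex set V, and suppose that for every pair of vertices x, y ∈ V there is given a set L(x,y) ⊆ V containing x and y such that: (i) the subgraph of G induced on the closed h'-neighborhood N_G(L(x,y), h') is connected; (ii) whenever d_G(x,y) ≤ 1, the diameter of L(x,y) in the graph metric is at most h; (iii) for all x, y, z ∈ V, L(x,y) ⊆ N_G(L(x,z) ∪ L(y,z), h). Then the vertex set V with the graph metric d_G is k-hyperbolic in the sense of Gromov, and for all x, y ∈ V, the Hausdorff distance (with respect to d_G) between L(x,y) and the vertex set of any geodesic from x to y is at most R. -/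

import Mathlib

namespace DGH
open SimpleGraph Walk

variable {V : Type} {G : SimpleGraph V}

/-- take the first `n` edges of a walk -/
def wtake : {x y : V} → (p : G.Walk x y) → (n : ℕ) → G.Walk x (p.getVert n)
  | _, _, .nil, _ => .nil
  | _, _, .cons _ _, 0 => .nil
  | _, _, .cons h q, n+1 => .cons h (wtake q n)

/-- drop the first `n` edges of a walk -/
def wdrop : {x y : V} → (p : G.Walk x y) → (n : ℕ) → G.Walk (p.getVert n) y
  | _, _, .nil, _ => .nil
  | _, _, .cons h q, 0 => .cons h q
  | _, _, .cons _ q, n+1 => wdrop q n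

@[simp] lemma wtake_length : ∀ {x y : V} (p : G.Walk x y) (n : ℕ),
    (wtake p n).length = min n p.length
  | _, _, .nil, n => by simp [wtake]
  | _, _, .cons _ _, 0 => by simp [wtake]; rfl
  | _, _, .cons h q, n+1 => by
      simp [wtake, wtake_length q n, Nat.succ_min_succ]

@[simp] lemma wdrop_length : ∀ {x y : V} (p : G.Walk x y) (n : ℕ),
    (wdrop p n).length = p.length - n
  | _, _, .nil, n => by simp [wdrop]
  | _, _, .cons _ _, 0 => by simp [wdrop]; rfl
  | _, _, .cons h q, n+1 => by simp [wdrop, wdrop_length q n]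

lemma wtake_getVert : ∀ {x y : V} (p : G.Walk x y) (n j : ℕ),
    (wtake p n).getVert j = p.getVert (min j n)
  | _, _, .nil, n, j => rfl
  | _, _, .cons _ _, 0, j => by simp [wtake]; rfl
  | _, _, .cons h q, n+1, 0 => by simp [wtake]
  | _, _, .cons h q, n+1, j+1 => by
      simpa [wtake, Nat.succ_min_succ, Walk.getVert_cons_succ] using wtake_getVert q n j

lemma wdrop_getVert : ∀ {x y : V} (p : G.Walk x y) (n j : ℕ),
    (wdrop p n).getVert j = p.getVert (n + j)
  | _, _, .nil, n, j => rfl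
  | _, _, .cons _ _, 0, j => by simp [wdrop]; rfl
  | _, _, .cons h q, n+1, j => by
      simpa [wdrop, Walk.getVert_cons_succ, Nat.succ_add] using wdrop_getVert q n j

lemma getVert_dist_le (p : G.Walk x y) {i j : ℕ} (hij : i ≤ j) :
    G.dist (p.getVert i) (p.getVert j) ≤ j - i := by
  have h := SimpleGraph.dist_le (wtake (wdrop p i) (j - i))
  rw [wtake_length, wdrop_length, wdrop_getVert, Nat.add_sub_cancel' hij] at h
  omega


lemma geo_dist (hc : G.Connected) {x y : V} (p : G.Walk x y) (hp : p.length = G.dist x y)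
    {i j : ℕ} (hij : i ≤ j) (hj : j ≤ p.length) :
    G.dist (p.getVert i) (p.getVert j) = j - i := by
  have h1 : G.dist x (p.getVert i) ≤ i := by
    simpa using getVert_dist_le p (Nat.zero_le i)
  have h2 := getVert_dist_le p hij
  have h3 : G.dist (p.getVert j) y ≤ p.length - j := by
    simpa [p.getVert_length] using getVert_dist_le p hj
  have t1 := hc.dist_triangle (u := x) (v := p.getVert i) (w := p.getVert j)
  have t2 := hc.dist_triangle (u := x) (v := p.getVert j) (w := y)
  omega

lemma geo_dist0 (hc : G.Connected) {x y : V} (p : G.Walk x y) (hp : p.length = G.dist x y)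
    {i : ℕ} (hi : i ≤ p.length) : G.dist x (p.getVert i) = i := by
  have := geo_dist hc p hp (Nat.zero_le i) hi
  simpa using this

lemma geo_dist1 (hc : G.Connected) {x y : V} (p : G.Walk x y) (hp : p.length = G.dist x y)
    {i : ℕ} (hi : i ≤ p.length) : G.dist (p.getVert i) y = p.length - i := by
  have := geo_dist hc p hp hi (le_refl p.length)
  simpa [p.getVert_length] using this

lemma stepA (hc : G.Connected) (L : V → V → Set V) (H : ℕ)
    (hmem : ∀ x y : V, x ∈ L x y ∧ y ∈ L x y)
    (hii : ∀ x y : V, G.dist x y ≤ 1 → ∀ a ∈ L x y, ∀ b ∈ L x y, G.dist a b ≤ H)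
    (hiii : ∀ x y z : V, ∀ a ∈ L x y, ∃ b ∈ L x z ∪ L y z, G.dist a b ≤ H) :
    ∀ m : ℕ, ∀ x y : V, ∀ p : G.Walk x y, p.length ≤ 2 ^ m →
      ∀ a ∈ L x y, ∃ j, j ≤ p.length ∧ G.dist a (p.getVert j) ≤ H * (m + 1) := by
  intro m
  induction m with
  | zero =>
    intro x y p hlen a ha
    refine ⟨0, Nat.zero_le _, ?_⟩
    rw [p.getVert_zero]
    have hd : G.dist x y ≤ 1 := le_trans (SimpleGraph.dist_le p) (by simpa using hlen)
    have := hii x y hd a ha x (hmem x y).1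
    omega
  | succ m IH =>
    intro x y p hlen a ha
    have hpow : 2 ^ (m + 1) = 2 ^ m + 2 ^ m := by ring
    set t := min (2 ^ m) p.length with ht
    have htle : t ≤ p.length := min_le_right _ _
    obtain ⟨b, hb, hab⟩ := hiii x y (p.getVert t) a ha
    have hmul : H * (m + 1 + 1) = H * (m + 1) + H := by ring
    cases hb with
    | inl hb =>
      have h1 : (wtake p t).length ≤ 2 ^ m := by rw [wtake_length]; omega
      obtain ⟨j, hj, hdist⟩ := IH x (p.getVert t) (wtake p t) h1 b hb
      rw [wtake_length] at hj
      rw [wtake_getVert] at hdist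
      have hjt : min j t = j := by omega
      rw [hjt] at hdist
      refine ⟨j, by omega, ?_⟩
      have tri := hc.dist_triangle (u := a) (v := b) (w := p.getVert j)
      omega
    | inr hb =>
      have h1 : ((wdrop p t).reverse).length ≤ 2 ^ m := by
        rw [Walk.length_reverse, wdrop_length]; omega
      obtain ⟨j, hj, hdist⟩ := IH y (p.getVert t) ((wdrop p t).reverse) h1 b hb
      rw [Walk.length_reverse, wdrop_length] at hj
      rw [Walk.getVert_reverse, wdrop_length, wdrop_getVert] at hdist
      refine ⟨t + (p.length - t - j), by omega, ?_⟩
      have tri := hc.dist_triangle (u := a) (v := b) (w := p.getVert (t + (p.length - t - j)))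
      omega


lemma aux_arith (H : ℕ) : ∀ t, 5 * H + 10 ≤ t → H * t + 7 * H < 2 ^ t := by
  intro t
  induction t with
  | zero => omega
  | succ t IH =>
    intro ht
    rcases Nat.lt_or_ge t (5 * H + 10) with hlt | hge
    · have het : t + 1 = 5 * H + 10 := by omega
      rw [het]
      have h2 : H + 1 ≤ 2 ^ H := Nat.lt_two_pow_self (n := H)
      have h3 : (H + 1) ^ 2 ≤ (H + 1) ^ 5 := Nat.pow_le_pow_right (by omega) (by omega)
      have h4 : (H + 1) ^ 5 ≤ (2 ^ H) ^ 5 := Nat.pow_le_pow_left h2 5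
      have h5 : 2 ^ (5 * H + 10) = (2 ^ H) ^ 5 * 1024 := by
        rw [show 5 * H + 10 = H * 5 + 10 by ring, pow_add, pow_mul]
        norm_num
      have h6 : (H + 1) ^ 2 * 1024 ≤ 2 ^ (5 * H + 10) := by
        rw [h5]
        exact Nat.mul_le_mul_right _ (le_trans h3 h4)
      nlinarith [sq_nonneg H]
    · have hH : H < 2 ^ t := lt_of_lt_of_le (Nat.lt_two_pow_self (n := H))
        (Nat.pow_le_pow_right (by omega) (by omega))
      have := IH hge
      have hp : 2 ^ (t + 1) = 2 ^ t + 2 ^ t := by ring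
      have hm : H * (t + 1) = H * t + H := by ring
      omega

lemma log_ineq (r : ℕ) (hr : r ≠ 0) : 6 * r ≤ 2 ^ (Nat.log 2 r + 4) := by
  have hlog1 : r < 2 ^ (Nat.log 2 r + 1) := Nat.lt_pow_succ_log_self (by norm_num) r
  calc 6 * r ≤ 8 * r := by omega
  _ ≤ 8 * 2 ^ (Nat.log 2 r + 1) := Nat.mul_le_mul_left 8 (le_of_lt hlog1)
  _ = 2 ^ (Nat.log 2 r + 1 + 3) := by rw [pow_add]; ring
  _ = 2 ^ (Nat.log 2 r + 4) := by norm_num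

set_option maxHeartbeats 1000000 in
lemma mainD' (hc : G.Connected) (L : V → V → Set V) (H D : ℕ)
    (hD1 : 3 * H + 1 ≤ D)
    (hD2 : ∀ s : ℕ, D < s → H * (Nat.log 2 s + 4 + 1) + 2 * H + 1 ≤ s)
    (hmem : ∀ x y : V, x ∈ L x y ∧ y ∈ L x y)
    (hii : ∀ x y : V, G.dist x y ≤ 1 → ∀ a ∈ L x y, ∀ b ∈ L x y, G.dist a b ≤ H)
    (hiii : ∀ x y z : V, ∀ a ∈ L x y, ∃ b ∈ L x z ∪ L y z, G.dist a b ≤ H) :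
    ∀ x y : V, ∀ p : G.Walk x y, p.length = G.dist x y →
      ∀ a ∈ L x y, ∃ j, j ≤ p.length ∧ G.dist a (p.getVert j) ≤ D := by
  suffices hsuf : ∀ n, ∀ x y : V, G.dist x y = n → ∀ p : G.Walk x y, p.length = G.dist x y →
      ∀ a ∈ L x y, ∃ j, j ≤ p.length ∧ G.dist a (p.getVert j) ≤ D by
    intro x y p hp a ha
    exact hsuf (G.dist x y) x y rfl p hp a ha
  intro n
  induction n using Nat.strong_induction_on with
  | _ n IH =>
  intro x y hdxy p hp a ha
  by_contra hcon
  push_neg at hcon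
  have hlen : p.length = n := by omega
  -- minimizing index
  obtain ⟨i, hi_mem, hi_min⟩ := Finset.exists_min_image (Finset.range (p.length + 1))
    (fun j => G.dist a (p.getVert j)) ⟨0, Finset.mem_range.mpr (Nat.succ_pos _)⟩
  rw [Finset.mem_range] at hi_mem
  have hi_le : i ≤ n := by omega
  set r := G.dist a (p.getVert i) with hr
  have hrD : D < r := hcon i (by omega)
  have hmin : ∀ j, j ≤ n → r ≤ G.dist a (p.getVert j) := by
    intro j hj
    exact hi_min j (Finset.mem_range.mpr (by omega))
  -- n = 0 case
  rcases Nat.eq_zero_or_pos n with hn0 | hn1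
  · have hd1 : G.dist x y ≤ 1 := by omega
    have := hii x y hd1 a ha x (hmem x y).1
    have h0 := hmin 0 (by omega)
    rw [p.getVert_zero] at h0
    omega
  set T := r + 2 * H + D + 1 with hT
  set i₁ := i - T with hi₁
  set i₂ := min (i + T) n with hi₂
  have hi₁₂ : i₁ ≤ i₂ := by omega
  have hi₂n : i₂ ≤ n := by omega
  obtain ⟨b, hb, hab⟩ := hiii x y (p.getVert i₁) a ha
  cases hb with
  | inl hb =>
    -- b ∈ L x (p.getVert i₁)
    rcases Nat.lt_or_ge i T with hiT | hiT
    · -- i₁ = 0 : u = x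
      have h0 : i₁ = 0 := by omega
      rw [h0, p.getVert_zero] at hb
      have hdxx : G.dist x x ≤ 1 := by rw [SimpleGraph.dist_self]; omega
      have hbx := hii x x hdxx b hb x (hmem x x).1
      have h0' := hmin 0 (by omega)
      rw [p.getVert_zero] at h0'
      have tri := hc.dist_triangle (u := a) (v := b) (w := x)
      omega
    · -- T ≤ i; use IH on pair (x, u)
      have hdxu : G.dist x (p.getVert i₁) = i₁ := geo_dist0 hc p hp (by omega)
      have hi₁n : i₁ < n := by omega
      have hqlen : (wtake p i₁).length = i₁ := by rw [wtake_length]; omega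
      obtain ⟨j, hj, hjd⟩ := IH i₁ hi₁n x (p.getVert i₁) (by omega) (wtake p i₁) (by omega) b hb
      rw [hqlen] at hj
      rw [wtake_getVert] at hjd
      have hmj : min j i₁ = j := by omega
      rw [hmj] at hjd
      have hgeo : G.dist (p.getVert j) (p.getVert i) = i - j := geo_dist hc p hp (by omega) (by omega)
      have tri1 := hc.dist_triangle (u := a) (v := b) (w := p.getVert j)
      have tri2 := hc.dist_triangle (u := p.getVert j) (v := a) (w := p.getVert i)
      have hcm := SimpleGraph.dist_comm (G := G) (u := p.getVert j) (v := a)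
      omega
  | inr hb =>
    -- b ∈ L y (p.getVert i₁)
    obtain ⟨c, hc', hbc⟩ := hiii y (p.getVert i₁) (p.getVert i₂) b hb
    cases hc' with
    | inl hc' =>
      -- c ∈ L y (p.getVert i₂)
      rcases Nat.lt_or_ge (i + T) n with hiTn | hiTn
      · -- i₂ = i + T < n : use IH on pair (y, v)
        have hdv : G.dist (p.getVert i₂) y = n - i₂ := by
          have := geo_dist1 hc p hp (i := i₂) (by omega)
          omega
        have hdyv : G.dist y (p.getVert i₂) = n - i₂ := by
          rw [SimpleGraph.dist_comm]; exact hdv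
        have hq : ((wdrop p i₂).reverse).length = n - i₂ := by
          rw [Walk.length_reverse, wdrop_length]; omega
        obtain ⟨j, hj, hjd⟩ := IH (n - i₂) (by omega) y (p.getVert i₂) (by omega)
          ((wdrop p i₂).reverse) (by omega) c hc'
        rw [hq] at hj
        rw [Walk.getVert_reverse, wdrop_length, wdrop_getVert, hlen] at hjd
        have hgeo : G.dist (p.getVert i) (p.getVert (i₂ + (n - i₂ - j))) = i₂ + (n - i₂ - j) - i :=
          geo_dist hc p hp (by omega) (by omega)
        have tri1 := hc.dist_triangle (u := a) (v := b) (w := p.getVert (i₂ + (n - i₂ - j)))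
        have tri2 := hc.dist_triangle (u := b) (v := c) (w := p.getVert (i₂ + (n - i₂ - j)))
        have tri3 := hc.dist_triangle (u := p.getVert i) (v := a)
          (w := p.getVert (i₂ + (n - i₂ - j)))
        have hcm := SimpleGraph.dist_comm (G := G) (u := p.getVert i) (v := a)
        omega
      · -- i₂ = n : v = y
        have hvy : p.getVert i₂ = y := by
          have : i₂ = p.length := by omega
          rw [this]; exact p.getVert_length
        rw [hvy] at hc'
        have hdyy : G.dist y y ≤ 1 := by rw [SimpleGraph.dist_self]; omega
        have hcy := hii y y hdyy c hc' y (hmem y y).1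
        have hn' := hmin n (le_refl _)
        have hyn : p.getVert n = y := by rw [← hlen]; exact p.getVert_length
        rw [hyn] at hn'
        have tri1 := hc.dist_triangle (u := a) (v := b) (w := y)
        have tri2 := hc.dist_triangle (u := b) (v := c) (w := y)
        omega
    | inr hc' =>
      -- c ∈ L (p.getVert i₁) (p.getVert i₂) : middle segment, use stepA
      have hend : (wdrop p i₁).getVert (i₂ - i₁) = p.getVert i₂ := by
        rw [wdrop_getVert]; congr 1; omega
      have hrpos : r ≠ 0 := by omega
      have h6r : 6 * r ≤ 2 ^ (Nat.log 2 r + 4) := log_ineq r hrpos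
      have hq2 : ((wtake (wdrop p i₁) (i₂ - i₁)).copy rfl hend).length ≤ 2 ^ (Nat.log 2 r + 4) := by
        rw [Walk.length_copy, wtake_length, wdrop_length]
        have hTr : T ≤ 3 * r := by omega
        omega
      obtain ⟨j, hj, hjd⟩ := stepA hc L H hmem hii hiii (Nat.log 2 r + 4)
        (p.getVert i₁) (p.getVert i₂) ((wtake (wdrop p i₁) (i₂ - i₁)).copy rfl hend) hq2 c hc'
      rw [Walk.length_copy, wtake_length, wdrop_length] at hj
      rw [Walk.getVert_copy, wtake_getVert, wdrop_getVert] at hjd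
      have hidx : i₁ + min j (i₂ - i₁) ≤ n := by omega
      have hmj := hmin (i₁ + min j (i₂ - i₁)) hidx
      have tri1 := hc.dist_triangle (u := a) (v := b) (w := p.getVert (i₁ + min j (i₂ - i₁)))
      have tri2 := hc.dist_triangle (u := b) (v := c) (w := p.getVert (i₁ + min j (i₂ - i₁)))
      have hfin := hD2 r hrD
      omega

lemma mainD (hc : G.Connected) (L : V → V → Set V) (H : ℕ)
    (hmem : ∀ x y : V, x ∈ L x y ∧ y ∈ L x y)
    (hii : ∀ x y : V, G.dist x y ≤ 1 → ∀ a ∈ L x y, ∀ b ∈ L x y, G.dist a b ≤ H)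
    (hiii : ∀ x y z : V, ∀ a ∈ L x y, ∃ b ∈ L x z ∪ L y z, G.dist a b ≤ H) :
    ∀ x y : V, ∀ p : G.Walk x y, p.length = G.dist x y →
      ∀ a ∈ L x y, ∃ j, j ≤ p.length ∧ G.dist a (p.getVert j) ≤ 2 ^ (5 * H + 10) := by
  apply mainD' hc L H (2 ^ (5 * H + 10)) ?_ ?_ hmem hii hiii
  · have hauxD := aux_arith H (5 * H + 10) (le_refl _)
    have h1024 : (1024:ℕ) ≤ 2 ^ (5 * H + 10) := by
      calc (1024 : ℕ) = 2 ^ 10 := by norm_num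
      _ ≤ 2 ^ (5 * H + 10) := Nat.pow_le_pow_right (by omega) (by omega)
    nlinarith
  · intro s hs
    have hspos : 0 < s := Nat.lt_of_le_of_lt (Nat.zero_le _) hs
    have hs0 : s ≠ 0 := Nat.pos_iff_ne_zero.mp hspos
    have hlog : 5 * H + 10 ≤ Nat.log 2 s :=
      (Nat.le_log_iff_pow_le (by norm_num) hs0).mpr (le_of_lt hs)
    have haux := aux_arith H (Nat.log 2 s) hlog
    have hple : 2 ^ Nat.log 2 s ≤ s := Nat.pow_log_le_self 2 hs0
    calc H * (Nat.log 2 s + 4 + 1) + 2 * H + 1 = H * Nat.log 2 s + 7 * H + 1 := by ring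
    _ ≤ 2 ^ Nat.log 2 s := haux
    _ ≤ s := hple


lemma ivt (f : ℕ → ℕ) (m : ℕ) (hstep : ∀ j, j < m → f (j + 1) ≤ f j + 1)
    (c : ℕ) (h0 : f 0 ≤ c) (hm : c ≤ f m) : ∃ j, j ≤ m ∧ f j = c := by
  induction m with
  | zero => exact ⟨0, le_refl _, by omega⟩
  | succ m IH =>
    rcases le_or_gt c (f m) with h | h
    · obtain ⟨j, hj, hjc⟩ := IH (fun j hj => hstep j (by omega)) h
      exact ⟨j, by omega, hjc⟩
    · exact ⟨m + 1, le_refl _, by have := hstep m (by omega); omega⟩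

lemma dir2 (h' : ℝ) (h'0 : 0 ≤ h') (hc : G.Connected) (L : V → V → Set V) (H : ℕ)
    (hmem : ∀ x y : V, x ∈ L x y ∧ y ∈ L x y)
    (hii : ∀ x y : V, G.dist x y ≤ 1 → ∀ a ∈ L x y, ∀ b ∈ L x y, G.dist a b ≤ H)
    (hiii : ∀ x y z : V, ∀ a ∈ L x y, ∃ b ∈ L x z ∪ L y z, G.dist a b ≤ H)
    (hS : ∀ x y : V, (G.induce {v : V | ∃ a ∈ L x y, (G.dist v a : ℝ) ≤ h'}).Connected) :
    ∀ x y : V, ∀ p : G.Walk x y, p.length = G.dist x y → ∀ i, i ≤ p.length →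
      ∃ a ∈ L x y, G.dist (p.getVert i) a ≤ ⌊h'⌋₊ + 2 * 2 ^ (5 * H + 10) := by
  intro x y p hp i hi
  set S := {v : V | ∃ a ∈ L x y, (G.dist v a : ℝ) ≤ h'} with hSdef
  have hxS : x ∈ S := ⟨x, (hmem x y).1, by simp only [SimpleGraph.dist_self, Nat.cast_zero]; exact h'0⟩
  have hyS : y ∈ S := ⟨y, (hmem x y).2, by simp only [SimpleGraph.dist_self, Nat.cast_zero]; exact h'0⟩
  obtain ⟨σ⟩ := (hS x y).preconnected ⟨x, hxS⟩ ⟨y, hyS⟩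
  -- the distance-to-x function along σ
  set f : ℕ → ℕ := fun j => G.dist x ((σ.getVert j) : V) with hf
  have hstep : ∀ j, j < σ.length → f (j + 1) ≤ f j + 1 := by
    intro j hj
    have hadj := σ.adj_getVert_succ hj
    rw [SimpleGraph.comap_adj] at hadj
    have h1 : G.dist ((σ.getVert j) : V) ((σ.getVert (j+1)) : V) ≤ 1 :=
      le_of_eq (SimpleGraph.dist_eq_one_iff_adj.mpr hadj)
    have tri := hc.dist_triangle (u := x) (v := ((σ.getVert j) : V))
      (w := ((σ.getVert (j+1)) : V))
    simp only [hf]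
    omega
  have h0 : f 0 ≤ i := by simp [hf, SimpleGraph.dist_self]
  have hm : i ≤ f σ.length := by
    simp only [hf, σ.getVert_length]
    omega
  obtain ⟨j, hjσ, hji⟩ := ivt f σ.length hstep i h0 hm
  have hji' : G.dist x ((σ.getVert j) : V) = i := hji
  obtain ⟨a, haL, haw⟩ := (σ.getVert j).2
  refine ⟨a, haL, ?_⟩
  have hawn : G.dist ((σ.getVert j) : V) a ≤ ⌊h'⌋₊ := Nat.le_floor haw
  obtain ⟨k, hk, hak⟩ := mainD hc L H hmem hii hiii x y p hp a haL
  -- distances along the geodesic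
  have hxi : G.dist x (p.getVert i) = i := geo_dist0 hc p hp hi
  have hxk : G.dist x (p.getVert k) = k := geo_dist0 hc p hp hk
  have hik : G.dist (p.getVert i) (p.getVert k) = max i k - min i k := by
    rcases le_total i k with h | h
    · have := geo_dist hc p hp h hk
      omega
    · have := geo_dist hc p hp h hi
      have hcm := SimpleGraph.dist_comm (G := G) (u := p.getVert i) (v := p.getVert k)
      omega
  have tri1 := hc.dist_triangle (u := x) (v := ((σ.getVert j) : V)) (w := p.getVert k)
  have tri2 := hc.dist_triangle (u := x) (v := p.getVert k) (w := ((σ.getVert j) : V))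
  have tri3 := hc.dist_triangle (u := ((σ.getVert j) : V)) (v := a) (w := p.getVert k)
  have tri4 := hc.dist_triangle (u := p.getVert i) (v := p.getVert k) (w := a)
  have hcm1 := SimpleGraph.dist_comm (G := G) (u := p.getVert k) (v := ((σ.getVert j) : V))
  have hcm2 := SimpleGraph.dist_comm (G := G) (u := a) (v := p.getVert k)
  have hcm3 := SimpleGraph.dist_comm (G := G) (u := ((σ.getVert j) : V)) (v := a)
  omega


lemma gprod (hc : G.Connected) {x z w : V} (p : G.Walk x z) (hp : p.length = G.dist x z)
    {j : ℕ} (hj : j ≤ p.length) :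
    G.dist x w + G.dist z w ≤ G.dist x z + 2 * G.dist (p.getVert j) w := by
  have h1 := hc.dist_triangle (u := x) (v := p.getVert j) (w := w)
  have h2 := hc.dist_triangle (u := z) (v := p.getVert j) (w := w)
  have e1 : G.dist x (p.getVert j) = j := geo_dist0 hc p hp hj
  have e2 : G.dist (p.getVert j) z = p.length - j := geo_dist1 hc p hp hj
  have e3 := SimpleGraph.dist_comm (G := G) (u := z) (v := p.getVert j)
  omega

lemma slim (h' : ℝ) (h'0 : 0 ≤ h') (hc : G.Connected) (L : V → V → Set V) (H : ℕ)
    (hmem : ∀ x y : V, x ∈ L x y ∧ y ∈ L x y)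
    (hii : ∀ x y : V, G.dist x y ≤ 1 → ∀ a ∈ L x y, ∀ b ∈ L x y, G.dist a b ≤ H)
    (hiii : ∀ x y z : V, ∀ a ∈ L x y, ∃ b ∈ L x z ∪ L y z, G.dist a b ≤ H)
    (hS : ∀ x y : V, (G.induce {v : V | ∃ a ∈ L x y, (G.dist v a : ℝ) ≤ h'}).Connected) :
    ∀ x y z : V, ∀ pxy : G.Walk x y, pxy.length = G.dist x y →
      ∀ pxz : G.Walk x z, pxz.length = G.dist x z →
      ∀ pyz : G.Walk y z, pyz.length = G.dist y z →
      ∀ i, i ≤ pxy.length →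
      (∃ j, j ≤ pxz.length ∧
        G.dist (pxy.getVert i) (pxz.getVert j) ≤ ⌊h'⌋₊ + 3 * 2 ^ (5 * H + 10) + H) ∨
      (∃ j, j ≤ pyz.length ∧
        G.dist (pxy.getVert i) (pyz.getVert j) ≤ ⌊h'⌋₊ + 3 * 2 ^ (5 * H + 10) + H) := by
  intro x y z pxy hxy pxz hxz pyz hyz i hi
  obtain ⟨a, haL, haw⟩ := dir2 h' h'0 hc L H hmem hii hiii hS x y pxy hxy i hi
  obtain ⟨b, hb, hab⟩ := hiii x y z a haL
  cases hb with
  | inl hb =>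
    obtain ⟨j, hj, hjd⟩ := mainD hc L H hmem hii hiii x z pxz hxz b hb
    refine Or.inl ⟨j, hj, ?_⟩
    have tri1 := hc.dist_triangle (u := pxy.getVert i) (v := a) (w := pxz.getVert j)
    have tri2 := hc.dist_triangle (u := a) (v := b) (w := pxz.getVert j)
    omega
  | inr hb =>
    obtain ⟨j, hj, hjd⟩ := mainD hc L H hmem hii hiii y z pyz hyz b hb
    refine Or.inr ⟨j, hj, ?_⟩
    have tri1 := hc.dist_triangle (u := pxy.getVert i) (v := a) (w := pyz.getVert j)
    have tri2 := hc.dist_triangle (u := a) (v := b) (w := pyz.getVert j)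
    omega

end DGH

open DGH in
set_option maxHeartbeats 1000000 in
/-- For all reals `h, h' ≥ 0` there exist `k, R ≥ 0` (depending only on
`h` and `h'`) such that: for any connected simple graph `G` on `V` and any family of sets
`L x y ⊆ V` containing `x` and `y` with (i) the induced subgraph on the closed
`h'`-neighborhood `N_G(L x y, h')` connected, (ii) diameter of `L x y` at most `h`
whenever `d_G(x,y) ≤ 1`, and (iii) `L x y ⊆ N_G(L x z ∪ L y z, h)` for all `x y z`,
the graph metric on `V` is `k`-hyperbolic in the sense of Gromov, and for all `x, y` the
Hausdorff distance between `L x y` and the vertex set of any geodesic from `x` to `y`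
is at most `R`. -/
theorem disc_graph_hyperbolicity_criterion_coarsely_connected :
    ∀ h h' : ℝ, 0 ≤ h → 0 ≤ h' → ∃ k R : ℝ, 0 ≤ k ∧ 0 ≤ R ∧
      ∀ (V : Type) (G : SimpleGraph V), G.Connected →
      ∀ L : V → V → Set V,
      (∀ x y : V, x ∈ L x y ∧ y ∈ L x y) →
      -- (i) the induced subgraph on the closed `h'`-neighborhood of `L x y` is connected
      (∀ x y : V,
        (G.induce {v : V | ∃ a ∈ L x y, (G.dist v a : ℝ) ≤ h'}).Connected) →
      -- (ii) diameter bound for adjacent or equal endpoints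
      (∀ x y : V, (G.dist x y : ℝ) ≤ 1 →
        ∀ a ∈ L x y, ∀ b ∈ L x y, (G.dist a b : ℝ) ≤ h) →
      -- (iii) the slim-triangles condition
      (∀ x y z : V, ∀ a ∈ L x y,
        ∃ b ∈ L x z ∪ L y z, (G.dist a b : ℝ) ≤ h) →
      -- conclusion: Gromov hyperbolicity of the graph metric ...
      ((∀ w x y z : V,
          ((G.dist x w : ℝ) + (G.dist y w : ℝ) - (G.dist x y : ℝ)) / 2 ≥
            min (((G.dist x w : ℝ) + (G.dist z w : ℝ) - (G.dist x z : ℝ)) / 2)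
                (((G.dist y w : ℝ) + (G.dist z w : ℝ) - (G.dist y z : ℝ)) / 2) - k) ∧
        -- ... and the Hausdorff-distance bound for geodesics
        (∀ x y : V, ∀ p : G.Walk x y, p.length = G.dist x y →
          (∀ a ∈ L x y, ∃ v ∈ p.support, (G.dist a v : ℝ) ≤ R) ∧
          (∀ v ∈ p.support, ∃ a ∈ L x y, (G.dist v a : ℝ) ≤ R))) := by
  intro h h' h0 h'0
  refine ⟨((3 * (⌊h'⌋₊ + 3 * 2 ^ (5 * ⌊h⌋₊ + 10) + ⌊h⌋₊) + 1 : ℕ) : ℝ),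
    ((⌊h'⌋₊ + 2 * 2 ^ (5 * ⌊h⌋₊ + 10) : ℕ) : ℝ), Nat.cast_nonneg _, Nat.cast_nonneg _, ?_⟩
  intro V G hc L hmem hSR hiiR hiiiR
  set H : ℕ := ⌊h⌋₊ with hHdef
  set δ : ℕ := ⌊h'⌋₊ + 3 * 2 ^ (5 * H + 10) + H with hδdef
  have hii : ∀ x y : V, G.dist x y ≤ 1 → ∀ a ∈ L x y, ∀ b ∈ L x y, G.dist a b ≤ H := by
    intro x y hxy a ha b hb
    exact Nat.le_floor (hiiR x y (by exact_mod_cast hxy) a ha b hb)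
  have hiii : ∀ x y z : V, ∀ a ∈ L x y, ∃ b ∈ L x z ∪ L y z, G.dist a b ≤ H := by
    intro x y z a ha
    obtain ⟨b, hb, hab⟩ := hiiiR x y z a ha
    exact ⟨b, hb, Nat.le_floor hab⟩
  constructor
  · -- hyperbolicity
    intro w x y z
    obtain ⟨pxy, hpxy⟩ := hc.exists_walk_length_eq_dist x y
    obtain ⟨pxw, hpxw⟩ := hc.exists_walk_length_eq_dist x w
    obtain ⟨pyw, hpyw⟩ := hc.exists_walk_length_eq_dist y w
    obtain ⟨pxz, hpxz⟩ := hc.exists_walk_length_eq_dist x z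
    obtain ⟨pyz, hpyz⟩ := hc.exists_walk_length_eq_dist y z
    have tri1 := hc.dist_triangle (u := y) (v := x) (w := w)
    have tri2 := hc.dist_triangle (u := x) (v := y) (w := w)
    have cm1 := SimpleGraph.dist_comm (G := G) (u := y) (v := x)
    set i : ℕ := (G.dist x y + G.dist x w + 1 - G.dist y w) / 2 with hidef
    have hin : i ≤ G.dist x y := by omega
    have hi' : i ≤ pxy.length := by omega
    -- step 1 : bound 2 * d(p, w) + d(x,y) ≤ d(x,w) + d(y,w) + 4δ + 1
    have hkey : 2 * G.dist (pxy.getVert i) w + G.dist x y ≤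
        G.dist x w + G.dist y w + 4 * δ + 1 := by
      rcases slim h' h'0 hc L H hmem hii hiii hSR x y w pxy hpxy pxw hpxw pyw hpyw i hi' with
        ⟨j, hj, hd⟩ | ⟨j, hj, hd⟩
      · have e1 : G.dist x (pxw.getVert j) = j := geo_dist0 hc pxw hpxw hj
        have e2 : G.dist (pxw.getVert j) w = pxw.length - j := geo_dist1 hc pxw hpxw hj
        have e3 : G.dist x (pxy.getVert i) = i := geo_dist0 hc pxy hpxy hi'
        have ta := hc.dist_triangle (u := x) (v := pxw.getVert j) (w := pxy.getVert i)
        have tb := hc.dist_triangle (u := pxy.getVert i) (v := pxw.getVert j) (w := w)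
        have cm2 := SimpleGraph.dist_comm (G := G) (u := pxw.getVert j) (v := pxy.getVert i)
        omega
      · have e1 : G.dist y (pyw.getVert j) = j := geo_dist0 hc pyw hpyw hj
        have e2 : G.dist (pyw.getVert j) w = pyw.length - j := geo_dist1 hc pyw hpyw hj
        have e3 : G.dist (pxy.getVert i) y = pxy.length - i := geo_dist1 hc pxy hpxy hi'
        have ta := hc.dist_triangle (u := y) (v := pyw.getVert j) (w := pxy.getVert i)
        have tb := hc.dist_triangle (u := pxy.getVert i) (v := pyw.getVert j) (w := w)
        have cm2 := SimpleGraph.dist_comm (G := G) (u := pyw.getVert j) (v := pxy.getVert i)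
        have cm3 := SimpleGraph.dist_comm (G := G) (u := pxy.getVert i) (v := y)
        omega
    -- step 2 : slim triangle (x,y,z) at i
    rcases slim h' h'0 hc L H hmem hii hiii hSR x y z pxy hpxy pxz hpxz pyz hpyz i hi' with
      ⟨j, hj, hd⟩ | ⟨j, hj, hd⟩
    · have hgp := gprod hc (w := w) pxz hpxz hj
      have tc := hc.dist_triangle (u := pxz.getVert j) (v := pxy.getVert i) (w := w)
      have cm2 := SimpleGraph.dist_comm (G := G) (u := pxz.getVert j) (v := pxy.getVert i)
      have hfin : G.dist x w + G.dist z w + G.dist x y ≤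
          G.dist x z + G.dist x w + G.dist y w + 6 * δ + 1 := by omega
      have hm := min_le_left (((G.dist x w : ℝ) + (G.dist z w : ℝ) - (G.dist x z : ℝ)) / 2)
        (((G.dist y w : ℝ) + (G.dist z w : ℝ) - (G.dist y z : ℝ)) / 2)
      have hfinR : (G.dist x w : ℝ) + G.dist z w + G.dist x y ≤
          G.dist x z + G.dist x w + G.dist y w + 6 * δ + 1 := by exact_mod_cast hfin
      rw [hδdef] at hfinR ⊢
      push_cast at hfinR ⊢
      linarith [hm]
    · have hgp := gprod hc (w := w) pyz hpyz hj
      have tc := hc.dist_triangle (u := pyz.getVert j) (v := pxy.getVert i) (w := w)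
      have cm2 := SimpleGraph.dist_comm (G := G) (u := pyz.getVert j) (v := pxy.getVert i)
      have hfin : G.dist y w + G.dist z w + G.dist x y ≤
          G.dist y z + G.dist x w + G.dist y w + 6 * δ + 1 := by omega
      have hm := min_le_right (((G.dist x w : ℝ) + (G.dist z w : ℝ) - (G.dist x z : ℝ)) / 2)
        (((G.dist y w : ℝ) + (G.dist z w : ℝ) - (G.dist y z : ℝ)) / 2)
      have hfinR : (G.dist y w : ℝ) + G.dist z w + G.dist x y ≤
          G.dist y z + G.dist x w + G.dist y w + 6 * δ + 1 := by exact_mod_cast hfin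
      rw [hδdef] at hfinR ⊢
      push_cast at hfinR ⊢
      linarith [hm]
  · -- Hausdorff bounds
    intro x y p hp
    constructor
    · intro a ha
      obtain ⟨j, hj, hjd⟩ := mainD hc L H hmem hii hiii x y p hp a ha
      refine ⟨p.getVert j, SimpleGraph.Walk.mem_support_iff_exists_getVert.mpr ⟨j, rfl, hj⟩, ?_⟩
      have : G.dist a (p.getVert j) ≤ ⌊h'⌋₊ + 2 * 2 ^ (5 * H + 10) := by omega
      exact_mod_cast Nat.cast_le.mpr this
    · intro v hv
      obtain ⟨j, hjv, hj⟩ := SimpleGraph.Walk.mem_support_iff_exists_getVert.mp hv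
      obtain ⟨a, haL, had⟩ := dir2 h' h'0 hc L H hmem hii hiii hSR x y p hp j hj
      refine ⟨a, haL, ?_⟩
      rw [← hjv]
      exact_mod_cast Nat.cast_le.mpr had
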